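/- Let G be a finite group and a ≥ 1. In the graph Γ_{a,a}(G) (vertices G^a, with x = (x₁,…,xₐ) adjacent to y = (y₁,…,yₐ) iff ⟨x₁,…,xₐ,y₁,…,yₐ⟩ = G, allowing loops), every edge between two distinct non-isolated vertices lies in a 3-cycle, except when a = 1 and G ≅ C₂. -/

import Mathlib

private lemma closure_ins_one {G : Type*} [Group G] (s : Set G) :
    Subgroup.closure (s ∪ {1}) = Subgroup.closure s := by
  refine le_antisymm ((Subgroup.closure_le _).2 ?_)
    (Subgroup.closure_mono Set.subset_union_left)
  rintro g (hg | rfl)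
  · exact Subgroup.subset_closure hg
  · exact one_mem _

private lemma aux5 {G : Type*} [Group G] [Finite G] [Nontrivial G]
    (a : ℕ) (ha : 1 ≤ a) (hcard : a = 1 → Nat.card G ≠ 2)
    (x : Fin a → G) (hx1 : x ≠ fun _ => 1)
    (hclx : Subgroup.closure (Set.range x) = ⊤) :
    ∃ z : Fin a → G, z ≠ x ∧ z ≠ (fun _ => 1) ∧
      Subgroup.closure (Set.range x ∪ Set.range z) = ⊤ ∧
      Subgroup.closure (Set.range z) = ⊤ := by
  obtain ⟨j, hj⟩ : ∃ j, x j ≠ 1 := by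
    by_contra h; push_neg at h; exact hx1 (funext h)
  rcases lt_or_ge a 2 with h2 | h2
  · have ha1 : a = 1 := by omega
    subst ha1
    by_cases hsq : x j * x j = 1
    · exfalso
      have hrange : Set.range x = {x j} := by
        ext g
        simp only [Set.mem_range, Set.mem_singleton_iff]
        constructor
        · rintro ⟨i, rfl⟩; rw [Subsingleton.elim i j]
        · rintro rfl; exact ⟨j, rfl⟩
      have hzp : Subgroup.zpowers (x j) = ⊤ := by
        rw [Subgroup.zpowers_eq_closure, ← hclx, hrange]
      have hcardG : Nat.card G = orderOf (x j) := by
        have h := Nat.card_zpowers (x j)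
        rw [hzp, Subgroup.card_top] at h
        exact h
      have ho : orderOf (x j) = 2 := by
        have h2 : x j ^ 2 = 1 := by rw [pow_two]; exact hsq
        haveI : Fact (Nat.Prime 2) := ⟨Nat.prime_two⟩
        exact orderOf_eq_prime h2 hj
      exact hcard rfl (by rw [hcardG, ho])
    · refine ⟨fun i => (x i)⁻¹, ?_, ?_, ?_, ?_⟩
      · intro h
        have h' := congrFun h j
        exact hsq (by nth_rewrite 1 [← h']; exact inv_mul_cancel (x j))
      · intro h
        have h' := congrFun h j
        exact hj (inv_eq_one.mp h')
      · rw [eq_top_iff, ← hclx]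
        exact Subgroup.closure_mono Set.subset_union_left
      · rw [eq_top_iff, ← hclx]
        refine (Subgroup.closure_le _).2 ?_
        rintro g ⟨i, rfl⟩
        exact inv_mem_iff.mp (Subgroup.subset_closure ⟨i, rfl⟩)
  · have h0 : 0 < a := by omega
    have h1 : 1 < a := by omega
    obtain ⟨k, hkj⟩ : ∃ k : Fin a, k ≠ j := by
      by_cases hjv : (j : ℕ) = 0
      · exact ⟨⟨1, h1⟩, fun h => by rw [Fin.ext_iff] at h; simp at h; omega⟩
      · exact ⟨⟨0, h0⟩, fun h => by rw [Fin.ext_iff] at h; simp at h; omega⟩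
    set z : Fin a → G := Function.update x k (x k * x j) with hz
    have hzj : z j = x j := Function.update_of_ne (Ne.symm hkj) _ _
    have hzk : z k = x k * x j := Function.update_self _ _ _
    have hmem : ∀ i, x i ∈ Subgroup.closure (Set.range z) := by
      intro i
      by_cases hik : i = k
      · subst hik
        have : x i = z i * (z j)⁻¹ := by rw [hzk, hzj]; group
        rw [this]
        exact mul_mem (Subgroup.subset_closure ⟨i, rfl⟩)
          (inv_mem (Subgroup.subset_closure ⟨j, rfl⟩))
      · have : x i = z i := (Function.update_of_ne hik _ _).symm
        rw [this]
        exact Subgroup.subset_closure ⟨i, rfl⟩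
    refine ⟨z, ?_, ?_, ?_, ?_⟩
    · intro h
      have h' := congrFun h k
      rw [hzk] at h'
      exact hj (by rwa [mul_eq_left] at h')
    · intro h
      have h' := congrFun h j
      rw [hzj] at h'
      exact hj h'
    · rw [eq_top_iff, ← hclx]
      exact Subgroup.closure_mono Set.subset_union_left
    · rw [eq_top_iff, ← hclx]
      refine (Subgroup.closure_le _).2 ?_
      rintro g ⟨i, rfl⟩
      exact hmem i

theorem stmt_5 {G : Type*} [Group G] [Finite G] [Nontrivial G]
    (a : ℕ) (ha : 1 ≤ a) (hexc : ¬ (a = 1 ∧ Nat.card G = 2))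
    (x y : Fin a → G) (hxy : x ≠ y)
    (hadj : Subgroup.closure (Set.range x ∪ Set.range y) = ⊤) :
    ∃ z : Fin a → G, z ≠ x ∧ z ≠ y ∧
      Subgroup.closure (Set.range x ∪ Set.range z) = ⊤ ∧
      Subgroup.closure (Set.range y ∪ Set.range z) = ⊤ := by
  haveI : Nonempty (Fin a) := ⟨⟨0, ha⟩⟩
  have hcard : a = 1 → Nat.card G ≠ 2 := fun h1 h2 => hexc ⟨h1, h2⟩
  have hone : Set.range (fun _ : Fin a => (1 : G)) = {1} := Set.range_const
  by_cases hy : y = fun _ => 1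
  · have hclx : Subgroup.closure (Set.range x) = ⊤ := by
      rw [hy, hone, closure_ins_one] at hadj; exact hadj
    obtain ⟨z, hzx, hz1, hcxz, hcz⟩ :=
      aux5 a ha hcard x (by rw [← hy]; exact hxy) hclx
    refine ⟨z, hzx, by rw [hy]; exact hz1, hcxz, ?_⟩
    rw [hy, hone, Set.union_comm, closure_ins_one]
    exact hcz
  · by_cases hx : x = fun _ => 1
    · have hcly : Subgroup.closure (Set.range y) = ⊤ := by
        rw [hx, hone, Set.union_comm, closure_ins_one] at hadj; exact hadj
      obtain ⟨z, hzy, hz1, hcyz, hcz⟩ := aux5 a ha hcard y hy hcly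
      refine ⟨z, by rw [hx]; exact hz1, hzy, ?_, hcyz⟩
      rw [hx, hone, Set.union_comm, closure_ins_one]
      exact hcz
    · refine ⟨fun i => x i * y i, ?_, ?_, ?_, ?_⟩
      · intro h
        apply hy
        funext i
        have h' := congrFun h i
        rwa [mul_eq_left] at h'
      · intro h
        apply hx
        funext i
        have h' := congrFun h i
        rwa [mul_eq_right] at h'
      · rw [eq_top_iff, ← hadj]
        refine (Subgroup.closure_le _).2 ?_
        rintro g (⟨i, rfl⟩ | ⟨i, rfl⟩)
        · exact Subgroup.subset_closure (Or.inl ⟨i, rfl⟩)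
        · have : y i = (x i)⁻¹ * (x i * y i) := by group
          rw [this]
          exact mul_mem (inv_mem (Subgroup.subset_closure (Or.inl ⟨i, rfl⟩)))
            (Subgroup.subset_closure (Or.inr ⟨i, rfl⟩))
      · rw [eq_top_iff, ← hadj]
        refine (Subgroup.closure_le _).2 ?_
        rintro g (⟨i, rfl⟩ | ⟨i, rfl⟩)
        · have : x i = (x i * y i) * (y i)⁻¹ := by group
          rw [this]
          exact mul_mem (Subgroup.subset_closure (Or.inr ⟨i, rfl⟩))
            (inv_mem (Subgroup.subset_closure (Or.inl ⟨i, rfl⟩)))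
        · exact Subgroup.subset_closure (Or.inl ⟨i, rfl⟩)
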